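/- Let q be a power of 2, n | q−1, and α ∈ F_q a primitive n-th root of unity. Let D be a nonzero cyclic code of length n over F_q with complete defining set Z(D), let p_1, p_2, p_3 be positive divisors of n, and let l_1, l_2, l_3 be integers. If Z(D) contains none of the n-th roots of unity that belong to an odd number of the cosets α^{l_1}G_{p_1}, α^{l_2}G_{p_2}, α^{l_3}G_{p_3}, then the minimum distance of D satisfies d(D) ≤ p_1 + p_2 + p_3 − 2·gcd(p_1,p_2,l_1−l_2) − 2·gcd(p_1,p_3,l_1−l_3) − 2·gcd(p_2,p_3,l_2−l_3) + 4·gcd(p_1,p_2,p_3,l_1−l_2,l_2−l_3). -/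

import Mathlib

open scoped BigOperators

namespace LRC

/-- Hamming weight of a vector. -/
noncomputable def hwt {n : ℕ} {F : Type*} [Zero F] (c : Fin n → F) : ℕ :=
  Nat.card {i : Fin n // c i ≠ 0}

/-- A linear code is cyclic if it is closed under the cyclic shift of coordinates. -/
def IsCyclicCode {n : ℕ} [NeZero n] {F : Type*} [Field F] (C : Submodule F (Fin n → F)) : Prop :=
  ∀ c ∈ C, (fun i : Fin n => c (i - 1)) ∈ C

/-- `A` is a recovery set for coordinate `i` of the code `C`. -/
def IsRecoverySet {n : ℕ} {F : Type*} [Field F] (C : Submodule F (Fin n → F)) (i : Fin n)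
    (A : Finset (Fin n)) : Prop :=
  i ∉ A ∧ ∃ φ : ((j : A) → F) → F, ∀ c ∈ C, c i = φ (fun j => c j)

/-- The code `C` has locality `r`. -/
def HasLocality {n : ℕ} {F : Type*} [Field F] (C : Submodule F (Fin n → F)) (r : ℕ) : Prop :=
  ∀ i : Fin n, ∃ A : Finset (Fin n), A.card ≤ r ∧ IsRecoverySet C i A

/-- Complete defining set of zeros of a cyclic code (locator field = symbol field). -/
def definingSet {n : ℕ} {F : Type*} [Field F] (C : Submodule F (Fin n → F)) : Set F :=
  {β | β ^ n = 1 ∧ ∀ c ∈ C, ∑ j : Fin n, c j * β ^ (j : ℕ) = 0}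

/-- Complete defining set of zeros of a cyclic code in an extension (locator) field `K`. -/
def definingSetExt (n : ℕ) {F K : Type*} [Field F] [Field K] [Algebra F K]
    (C : Submodule F (Fin n → F)) : Set K :=
  {β | β ^ n = 1 ∧ ∀ c ∈ C, ∑ j : Fin n, algebraMap F K (c j) * β ^ (j : ℕ) = 0}

/-- The cyclic code with a given set of zeros. -/
def codeOfZeros (n : ℕ) {F : Type*} [Field F] (Z : Set F) : Submodule F (Fin n → F) where
  carrier := {c | ∀ β ∈ Z, ∑ j : Fin n, c j * β ^ (j : ℕ) = 0}
  add_mem' := by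
    intro a b ha hb β hβ
    have h1 := ha β hβ
    have h2 := hb β hβ
    calc ∑ j : Fin n, (a + b) j * β ^ (j : ℕ)
        = (∑ j : Fin n, a j * β ^ (j : ℕ)) + ∑ j : Fin n, b j * β ^ (j : ℕ) := by
          rw [← Finset.sum_add_distrib]
          exact Finset.sum_congr rfl (by intro j _; simp [add_mul])
      _ = 0 := by rw [h1, h2, add_zero]
  zero_mem' := by intro β hβ; simp
  smul_mem' := by
    intro t a ha β hβ
    have h1 := ha β hβ
    calc ∑ j : Fin n, (t • a) j * β ^ (j : ℕ)
        = t * ∑ j : Fin n, a j * β ^ (j : ℕ) := by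
          rw [Finset.mul_sum]
          exact Finset.sum_congr rfl (by intro j _; simp [mul_assoc])
      _ = 0 := by rw [h1, mul_zero]

/-- Minimum distance: least Hamming weight of a nonzero codeword. -/
noncomputable def minDist {n : ℕ} {F : Type*} [Field F] (C : Submodule F (Fin n → F)) : ℕ :=
  sInf {w | ∃ c ∈ C, c ≠ 0 ∧ hwt c = w}

/-- The dual code under the standard bilinear form. -/
def dualCode {n : ℕ} {F : Type*} [Field F] (C : Submodule F (Fin n → F)) :
    Submodule F (Fin n → F) where
  carrier := {y | ∀ c ∈ C, ∑ i : Fin n, c i * y i = 0}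
  add_mem' := by
    intro a b ha hb c hc
    have h1 := ha c hc
    have h2 := hb c hc
    calc ∑ i : Fin n, c i * (a + b) i
        = (∑ i : Fin n, c i * a i) + ∑ i : Fin n, c i * b i := by
          rw [← Finset.sum_add_distrib]
          exact Finset.sum_congr rfl (by intro j _; simp [mul_add])
      _ = 0 := by rw [h1, h2, add_zero]
  zero_mem' := by intro c hc; simp
  smul_mem' := by
    intro t a ha c hc
    have h1 := ha c hc
    calc ∑ i : Fin n, c i * (t • a) i
        = t * ∑ i : Fin n, c i * a i := by
          rw [Finset.mul_sum]
          exact Finset.sum_congr rfl (by intro j _; simp [mul_assoc]; ring)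
      _ = 0 := by rw [h1, mul_zero]



open scoped Classical

/-- The coset `α^l G_m` of the subgroup `G_m = {α^{jm}}` of the n-th roots of unity. -/
def coset {F : Type*} [Field F] (α : F) (n : ℕ) (l : ℤ) (m : ℕ) : Set F :=
  {β | ∃ j : ℕ, j < n / m ∧ β = α ^ (l + (j : ℤ) * m)}

section LRCaux
open Finset

lemma LRCcount {n : ℕ} (hn : 0 < n) {u : ℕ} (hu : 0 < u) (hun : u ∣ n) :
    (Finset.univ.filter (fun j : Fin n => n ∣ j.val * u)).card = u := by
  classical
  obtain ⟨d, hd⟩ := hun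
  have hd0 : 0 < d := by
    rcases Nat.eq_zero_or_pos d with h | h
    · subst h; simp at hd; omega
    · exact h
  have hiff : ∀ j : Fin n, (n ∣ j.val * u ↔ d ∣ j.val) := by
    intro j
    constructor
    · rintro ⟨s, hs⟩
      have h1 : j.val * u = d * s * u := by rw [hs, hd]; ring
      have hju : j.val = d * s := by
        have := Nat.eq_of_mul_eq_mul_right hu h1
        omega
      exact ⟨s, hju⟩
    · rintro ⟨s, hs⟩
      exact ⟨s, by rw [hs, hd]; ring⟩
  have hset : (Finset.univ.filter (fun j : Fin n => n ∣ j.val * u))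
      = Finset.univ.filter (fun j : Fin n => d ∣ j.val) := by
    apply Finset.filter_congr; intro j _; simp [hiff j]
  rw [hset]
  have hcard := Finset.card_bij' (fun (j : Fin n) (_ : j ∈ Finset.univ.filter (fun j : Fin n => d ∣ j.val)) => j.val / d)
    (fun (t : ℕ) (ht : t ∈ Finset.range u) => (⟨t * d, by
      have ht' : t < u := Finset.mem_range.1 ht
      have : t * d < u * d := by exact Nat.mul_lt_mul_of_lt_of_le ht' le_rfl hd0
      omega⟩ : Fin n))
    (by
      intro j hj
      simp only [Finset.mem_filter] at hj
      obtain ⟨s, hs⟩ := hj.2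
      have hjn : j.val < n := j.isLt
      simp only [Finset.mem_range]
      rw [hs, Nat.mul_div_cancel_left _ hd0]
      by_contra h
      push_neg at h
      have h1 : u * d ≤ s * d := Nat.mul_le_mul_right d h
      have h2 : d * s < u * d := by rw [← hs, ← hd]; exact hjn
      have h3 : d * s = s * d := mul_comm d s
      omega)
    (by
      intro t ht
      simp only [Finset.mem_filter, Finset.mem_univ, true_and]
      exact ⟨t, by ring⟩)
    (by
      intro j hj
      simp only [Finset.mem_filter] at hj
      exact Fin.ext (by simpa using Nat.div_mul_cancel hj.2))
    (by
      intro t ht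
      simp [Nat.mul_div_cancel _ hd0])
  rw [hcard, Finset.card_range]

set_option maxHeartbeats 3200000 in
lemma LRCptwise {F : Type*} [Field F] [DecidableEq F] (hc2 : ∀ x : F, x + x = 0)
    (a1 a2 a3 : F) (h1 : a1 ≠ 0) (h2 : a2 ≠ 0) (h3 : a3 ≠ 0)
    (S1 S2 S3 Q12 Q13 Q23 : Prop)
    [Decidable S1] [Decidable S2] [Decidable S3]
    [Decidable Q12] [Decidable Q13] [Decidable Q23]
    (e12 : Q12 ↔ a1 = a2) (e13 : Q13 ↔ a1 = a3) (e23 : Q23 ↔ a2 = a3) :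
    (if (if S1 then a1 else 0) + (if S2 then a2 else 0) + (if S3 then a3 else 0) ≠ 0
        then (1:ℤ) else 0)
      + 2 * (if S1 ∧ S2 ∧ Q12 then 1 else 0)
      + 2 * (if S1 ∧ S3 ∧ Q13 then 1 else 0)
      + 2 * (if S2 ∧ S3 ∧ Q23 then 1 else 0)
      ≤ (if S1 then 1 else 0) + (if S2 then 1 else 0) + (if S3 then 1 else 0)
        + 4 * (if S1 ∧ S2 ∧ S3 ∧ Q12 ∧ Q23 then 1 else 0) := by
  by_cases hS1 : S1 <;> by_cases hS2 : S2 <;> by_cases hS3 : S3 <;>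
    by_cases hQ12 : Q12 <;> by_cases hQ13 : Q13 <;> by_cases hQ23 : Q23
  all_goals try simp_all [hc2]
  all_goals try (split_ifs <;> omega)

end LRCaux

open scoped Fin.NatCast

/-- if the defining set of a nonzero cyclic code contains none of the n-th roots
of unity lying in an odd number of three given cosets, then the minimum distance is bounded by
the inclusion–exclusion expression. -/

theorem stmt17 {F : Type*} [Field F] [Fintype F] (q n : ℕ) [NeZero n]
    (hq : Fintype.card F = q) (hq2 : ∃ e : ℕ, 0 < e ∧ q = 2 ^ e) (hn : n ∣ q - 1)
    (α : F) (hα : IsPrimitiveRoot α n)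
    (p₁ p₂ p₃ : ℕ) (hp₁ : 0 < p₁) (hp₂ : 0 < p₂) (hp₃ : 0 < p₃)
    (hp₁n : p₁ ∣ n) (hp₂n : p₂ ∣ n) (hp₃n : p₃ ∣ n)
    (l₁ l₂ l₃ : ℤ)
    (D : Submodule F (Fin n → F)) (hcyc : IsCyclicCode D) (hD : D ≠ ⊥)
    (hZ : ∀ γ : F, γ ^ n = 1 →
      Odd ((if γ ∈ coset α n l₁ p₁ then 1 else 0) + (if γ ∈ coset α n l₂ p₂ then 1 else 0)
          + (if γ ∈ coset α n l₃ p₃ then 1 else 0) : ℕ) →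
      γ ∉ definingSet D) :
    (minDist D : ℤ) ≤ (p₁ : ℤ) + p₂ + p₃
        - 2 * Nat.gcd (Nat.gcd p₁ p₂) (l₁ - l₂).natAbs
        - 2 * Nat.gcd (Nat.gcd p₁ p₃) (l₁ - l₃).natAbs
        - 2 * Nat.gcd (Nat.gcd p₂ p₃) (l₂ - l₃).natAbs
        + 4 * Nat.gcd (Nat.gcd (Nat.gcd (Nat.gcd p₁ p₂) p₃) (l₁ - l₂).natAbs)
            (l₂ - l₃).natAbs := by
  classical
  have hn0 : 0 < n := Nat.pos_of_ne_zero (NeZero.ne n)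
  have hα0 : α ≠ 0 := hα.ne_zero (NeZero.ne n)
  have hαn : α ^ n = 1 := hα.pow_eq_one
  -- characteristic two
  have h2F : (2 : F) = 0 := by
    haveI := ringChar.charP F
    obtain ⟨k, hpp, hcard⟩ := FiniteField.card F (ringChar F)
    obtain ⟨e, he0, hqe⟩ := hq2
    have h2e : ringChar F ∣ 2 ^ e := by
      rw [← hqe, ← hq, hcard]
      exact dvd_pow_self _ (by positivity)
    have hdvd2 := hpp.dvd_of_dvd_pow h2e
    have hr2 : ringChar F = 2 := (Nat.prime_dvd_prime_iff_eq hpp Nat.prime_two).1 hdvd2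
    have hcast := CharP.cast_eq_zero F (ringChar F)
    rw [hr2] at hcast
    exact_mod_cast hcast
  have hc2 : ∀ x : F, x + x = 0 := fun x => by
    have h : (2:F) * x = 0 := by rw [h2F, zero_mul]
    calc x + x = 2 * x := by ring
    _ = 0 := h
  have hnodd : Odd n := by
    obtain ⟨e, he0, hqe⟩ := hq2
    have hev : Even q := by
      rw [hqe]; exact (Nat.even_pow.2 ⟨even_two, by omega⟩)
    have hq1 : 1 ≤ q := by rw [hqe]; exact Nat.one_le_two_pow
    have hq1o : Odd (q - 1) := Nat.Even.sub_odd hq1 hev odd_one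
    rcases Nat.even_or_odd n with he | ho
    · exfalso
      have h2n : 2 ∣ n := he.two_dvd
      obtain ⟨w, hw⟩ := h2n.trans hn
      obtain ⟨u, hu⟩ := hq1o
      omega
    · exact ho
  -- zpow facts
  have hzeq : ∀ a b : ℤ, α ^ a = α ^ b ↔ (n:ℤ) ∣ (a - b) := by
    intro a b
    rw [← hα.zpow_eq_one_iff_dvd (a - b), zpow_sub₀ hα0,
      div_eq_one_iff_eq (zpow_ne_zero _ hα0)]
  have hzc : ∀ a b : ℤ, (n:ℤ) ∣ (a - b) → α ^ a = α ^ b := fun a b h => (hzeq a b).2 h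
  have hsubval : ∀ a b : Fin n,
      (n:ℤ) ∣ (((a - b : Fin n).val : ℤ) - ((a.val : ℤ) - (b.val : ℤ))) := by
    intro a b
    have hble : b.val ≤ n := le_of_lt b.isLt
    have h1 : ((a - b : Fin n).val : ℤ) = ((n:ℤ) - b.val + a.val) % n := by
      rw [Fin.sub_def]
      push_cast [Nat.cast_sub hble]
      rfl
    refine ⟨1 - ((n:ℤ) - b.val + a.val) / n, ?_⟩
    rw [h1, Int.emod_def]; ring
  -- shifts stay in the code
  have hshift : ∀ d ∈ D, ∀ i : ℕ, (fun j : Fin n => d (j - (i : Fin n))) ∈ D := by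
    intro d hd i
    induction i with
    | zero => simpa using hd
    | succ i ih =>
      have h := hcyc _ ih
      have heq : (fun j : Fin n => d (j - ((i+1 : ℕ) : Fin n)))
          = (fun j : Fin n => d ((j - 1) - (i : Fin n))) := by
        funext j
        congr 1
        push_cast
        rw [sub_sub, add_comm]
      rw [heq]
      exact h
  -- eigenvector membership
  have hvmem : ∀ m : ℕ, (∃ d ∈ D, ∑ j : Fin n, d j * α ^ ((m:ℤ) * j.val) ≠ 0) →
      (fun j : Fin n => α ^ (-((m : ℤ) * j.val))) ∈ D := by
    rintro m ⟨d, hd, hS⟩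
    set S := ∑ j : Fin n, d j * α ^ ((m:ℤ) * j.val) with hSdef
    have hw : (∑ i : Fin n, (α ^ (-((m:ℤ) * i.val))) • (fun j : Fin n => d (j - (i.val : Fin n)))) ∈ D :=
      Submodule.sum_mem _ (fun i _ => Submodule.smul_mem _ _ (hshift d hd i.val))
    have hweq : (∑ i : Fin n, (α ^ (-((m:ℤ) * i.val))) • (fun j : Fin n => d (j - (i.val : Fin n))))
        = S • (fun j : Fin n => α ^ (-((m : ℤ) * j.val))) := by
      funext j
      simp only [Finset.sum_apply, Pi.smul_apply, smul_eq_mul, Fin.cast_val_eq_self]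
      have hre := Fintype.sum_equiv (Equiv.subLeft j)
        (fun i : Fin n => α ^ (-((m:ℤ) * ((j - i : Fin n)).val)) * d i)
        (fun i : Fin n => α ^ (-((m:ℤ) * i.val)) * d (j - i))
        (by
          intro i
          simp only [Equiv.subLeft_apply]
          rw [sub_sub_cancel])
      rw [← hre]
      have hterm : ∀ i : Fin n, α ^ (-((m:ℤ) * ((j - i : Fin n)).val))
          = α ^ (-((m:ℤ) * j.val)) * α ^ ((m:ℤ) * i.val) := by
        intro i
        rw [← zpow_add₀ hα0]
        apply hzc
        obtain ⟨k, hk⟩ := hsubval j i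
        exact ⟨-(m:ℤ) * k, by linear_combination (-(m:ℤ)) * hk⟩
      calc (∑ i : Fin n, α ^ (-((m:ℤ) * ((j - i : Fin n)).val)) * d i)
          = ∑ i : Fin n, α ^ (-((m:ℤ) * j.val)) * (d i * α ^ ((m:ℤ) * i.val)) := by
            apply Finset.sum_congr rfl
            intro i _
            rw [hterm i]; ring
        _ = S * α ^ (-((m:ℤ) * j.val)) := by
            rw [← Finset.mul_sum, hSdef]; ring
    have hmem2 := Submodule.smul_mem D S⁻¹ (hweq ▸ hw)
    rwa [smul_smul, inv_mul_cancel₀ hS, one_smul] at hmem2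
  -- coset membership
  have hcos : ∀ (l : ℤ) (p : ℕ), 0 < p → p ∣ n → ∀ m : ℕ,
      ((α ^ m ∈ coset α n l p) ↔ (p:ℤ) ∣ ((m:ℤ) - l)) := by
    intro l p hp hpn m
    have hnp0 : 0 < n / p := Nat.div_pos (Nat.le_of_dvd hn0 hpn) hp
    constructor
    · rintro ⟨j, hj, hje⟩
      have hje' : α ^ (m:ℤ) = α ^ (l + (j:ℤ) * p) := by rw [zpow_natCast]; exact hje
      have hnd : (n:ℤ) ∣ ((m:ℤ) - (l + (j:ℤ) * p)) := (hzeq _ _).1 hje'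
      have hpn' : (p:ℤ) ∣ (n:ℤ) := Int.natCast_dvd_natCast.2 hpn
      have h1 : (p:ℤ) ∣ ((m:ℤ) - (l + (j:ℤ)*p)) := dvd_trans hpn' hnd
      have h3 : (m:ℤ) - l = ((m:ℤ) - (l + (j:ℤ)*p)) + (j:ℤ)*p := by ring
      rw [h3]
      exact dvd_add h1 ⟨j, mul_comm _ _⟩
    · rintro ⟨s, hs⟩
      have hnp' : ((n/p : ℕ) : ℤ) ≠ 0 := by exact_mod_cast hnp0.ne'
      have hr0 : 0 ≤ s % ((n/p : ℕ) : ℤ) := Int.emod_nonneg s hnp'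
      have hrlt : s % ((n/p : ℕ) : ℤ) < ((n/p : ℕ) : ℤ) :=
        Int.emod_lt_of_pos s (by exact_mod_cast hnp0)
      refine ⟨(s % ((n/p : ℕ) : ℤ)).toNat, ?_, ?_⟩
      · have h : ((s % ((n/p : ℕ) : ℤ)).toNat : ℤ) < ((n/p : ℕ) : ℤ) := by
          rw [Int.toNat_of_nonneg hr0]; exact hrlt
        exact_mod_cast h
      · rw [← zpow_natCast α m]
        apply hzc
        have htn : ((s % ((n/p : ℕ) : ℤ)).toNat : ℤ) = s % ((n/p : ℕ) : ℤ) :=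
          Int.toNat_of_nonneg hr0
        have hpnp : (p:ℤ) * ((n/p : ℕ) : ℤ) = (n:ℤ) := by
          exact_mod_cast Nat.mul_div_cancel' hpn
        refine ⟨s / ((n/p : ℕ) : ℤ), ?_⟩
        have hdiv : s % ((n/p : ℕ) : ℤ) = s - ((n/p : ℕ) : ℤ) * (s / ((n/p : ℕ) : ℤ)) :=
          Int.emod_def s _
        rw [htn, hdiv]
        linear_combination hs + (s / ((n/p : ℕ) : ℤ)) * hpnp
  -- geometric-sum evaluation
  have hgeo : ∀ (l : ℤ) (p : ℕ), 0 < p → p ∣ n → ∀ j : Fin n,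
      (∑ m ∈ Finset.range n, (if (p:ℤ) ∣ ((m:ℤ) - l) then α ^ (-((m:ℤ) * j.val)) else 0))
        = (if n ∣ j.val * p then α ^ (-(l * j.val)) else 0) := by
    intro l p hp hpn j
    have hp' : ((p:ℤ)) ≠ 0 := by exact_mod_cast hp.ne'
    have hnp0 : 0 < n / p := Nat.div_pos (Nat.le_of_dvd hn0 hpn) hp
    have hl0c : (((l % p).toNat : ℤ)) = l % p := Int.toNat_of_nonneg (Int.emod_nonneg l hp')
    set l0 := (l % p).toNat with hl0def
    have hl0lt : l0 < p := by
      have := Int.emod_lt_of_pos l (show (0:ℤ) < p by exact_mod_cast hp)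
      omega
    have hpl : (p:ℤ) ∣ (l - l0) := ⟨l / p, by rw [hl0c, Int.emod_def]; ring⟩
    have hcond : ∀ m : ℕ, ((p:ℤ) ∣ ((m:ℤ) - l)) ↔ m % p = l0 := by
      intro m
      constructor
      · intro h
        have h2 : (p:ℤ) ∣ ((m:ℤ) - l0) := by
          have h3 : (m:ℤ) - l0 = ((m:ℤ) - l) + (l - l0) := by ring
          rw [h3]; exact dvd_add h hpl
        obtain ⟨t, ht⟩ := h2
        have hm : (m:ℤ) = l0 + p * t := by linarith
        have ht0 : 0 ≤ t := by nlinarith [hl0c, Int.emod_nonneg l hp', (show (0:ℤ) ≤ m by positivity)]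
        have hmn : m = l0 + p * t.toNat := by
          have htt : (t.toNat : ℤ) = t := Int.toNat_of_nonneg ht0
          rw [← htt] at hm
          exact_mod_cast hm
        rw [hmn, Nat.add_mul_mod_self_left, Nat.mod_eq_of_lt hl0lt]
      · intro h
        have h1 : (p:ℤ) ∣ ((m:ℤ) - l0) := by
          refine ⟨((m / p : ℕ) : ℤ), ?_⟩
          have hh : l0 + p * (m / p) = m := by rw [← h]; exact Nat.mod_add_div m p
          have h4 : ((l0 : ℕ) : ℤ) + ((p:ℕ):ℤ) * ((m/p : ℕ):ℤ) = ((m:ℕ):ℤ) := by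
            exact_mod_cast hh
          linarith
        have h3 : (m:ℤ) - l = ((m:ℤ) - l0) - (l - l0) := by ring
        rw [h3]; exact dvd_sub h1 hpl
    rw [← Finset.sum_filter]
    have hfe : (Finset.range n).filter (fun m : ℕ => (p:ℤ) ∣ ((m:ℤ) - l))
        = (Finset.range (n/p)).image (fun t => l0 + t * p) := by
      ext m
      simp only [Finset.mem_filter, Finset.mem_range, Finset.mem_image]
      constructor
      · rintro ⟨hmn, hdvd⟩
        have hm : m % p = l0 := (hcond m).1 hdvd
        refine ⟨m / p, Nat.div_lt_div_of_lt_of_dvd hpn hmn, ?_⟩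
        rw [← hm, mul_comm]
        exact Nat.mod_add_div m p
      · rintro ⟨t, ht, rfl⟩
        refine ⟨?_, (hcond _).2 (by rw [Nat.add_mul_mod_self_right, Nat.mod_eq_of_lt hl0lt])⟩
        have h2 : p + t * p = (t+1) * p := by ring
        have h3 : (t+1) * p ≤ (n/p) * p := Nat.mul_le_mul_right _ (by omega)
        have h4 : (n/p) * p = n := Nat.div_mul_cancel hpn
        omega
    rw [hfe, Finset.sum_image (by
      intro x _ y _ hxy
      have hxp : x * p = y * p := by simp only at hxy; omega
      exact Nat.eq_of_mul_eq_mul_right hp hxp)]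
    have hterm : ∀ t, α ^ (-(((l0 + t * p : ℕ) : ℤ) * j.val))
        = α ^ (-((l0:ℤ) * j.val)) * (α ^ (-((p:ℤ) * j.val))) ^ t := by
      intro t
      rw [← zpow_natCast (α ^ (-((p:ℤ) * j.val))) t, ← zpow_mul, ← zpow_add₀ hα0]
      congr 1
      push_cast
      ring
    rw [Finset.sum_congr rfl (fun t _ => hterm t), ← Finset.mul_sum]
    by_cases hdvd : n ∣ j.val * p
    · rw [if_pos hdvd]
      have hr1 : α ^ (-((p:ℤ) * j.val)) = 1 := by
        rw [← zpow_zero α]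
        apply hzc
        obtain ⟨k, hk⟩ := hdvd
        refine ⟨-k, ?_⟩
        have hc : ((j.val * p : ℕ) : ℤ) = (n:ℤ) * k := by exact_mod_cast hk
        push_cast at hc
        linarith
      rw [hr1]
      simp only [one_pow, Finset.sum_const, Finset.card_range, nsmul_eq_mul, mul_one]
      have hnpodd : Odd (n / p) := by
        rcases Nat.even_or_odd (n/p) with he | ho
        · exfalso
          have h2d : 2 ∣ n := dvd_trans he.two_dvd (Nat.div_dvd_of_dvd hpn)
          obtain ⟨w, hw⟩ := h2d
          obtain ⟨u, hu⟩ := hnodd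
          omega
        · exact ho
      have hnp1 : ((n/p : ℕ) : F) = 1 := by
        obtain ⟨k, hk⟩ := hnpodd
        rw [hk]
        push_cast
        rw [h2F]
        ring
      rw [hnp1, mul_one]
      apply hzc
      obtain ⟨u, hu⟩ := hpl
      obtain ⟨k, hk⟩ := hdvd
      refine ⟨u * k, ?_⟩
      have hc : ((j.val * p : ℕ) : ℤ) = (n:ℤ) * k := by exact_mod_cast hk
      push_cast at hc
      linear_combination (j.val:ℤ) * hu + u * hc
    · rw [if_neg hdvd]
      have hr1 : α ^ (-((p:ℤ) * j.val)) ≠ 1 := by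
        intro h
        apply hdvd
        rw [← zpow_zero α] at h
        have hzd := (hzeq _ _).1 h
        have h2 : (n:ℤ) ∣ ((j.val * p : ℕ) : ℤ) := by
          obtain ⟨k, hk⟩ := hzd
          refine ⟨-k, ?_⟩
          push_cast
          linarith
        exact_mod_cast h2
      rw [geom_sum_eq hr1]
      have hpow : (α ^ (-((p:ℤ) * j.val))) ^ (n/p) = 1 := by
        rw [← zpow_natCast, ← zpow_mul]
        refine (hα.zpow_eq_one_iff_dvd _).2 ⟨-(j.val:ℤ), ?_⟩
        have hpnp : (p:ℤ) * ((n/p : ℕ) : ℤ) = (n:ℤ) := by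
          exact_mod_cast Nat.mul_div_cancel' hpn
        linear_combination (-(j.val:ℤ)) * hpnp
      rw [hpow]
      simp
  -- the codeword
  set c : Fin n → F := fun j =>
    (if n ∣ j.val * p₁ then α ^ (-(l₁ * j.val)) else 0) +
    (if n ∣ j.val * p₂ then α ^ (-(l₂ * j.val)) else 0) +
    (if n ∣ j.val * p₃ then α ^ (-(l₃ * j.val)) else 0) with hcdef
  have h11 : (1:F) + 1 = 0 := by rw [← h2F]; norm_num
  -- membership in D of eigenvectors indexed by "odd" m
  have hmm : ∀ m : ℕ,
      Odd ((if (p₁:ℤ) ∣ ((m:ℤ) - l₁) then 1 else 0) + (if (p₂:ℤ) ∣ ((m:ℤ) - l₂) then 1 else 0)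
          + (if (p₃:ℤ) ∣ ((m:ℤ) - l₃) then 1 else 0) : ℕ) →
      (fun j : Fin n => α ^ (-((m:ℤ) * j.val))) ∈ D := by
    intro m hoddm
    apply hvmem m
    have hγ : (α ^ m) ^ n = 1 := by rw [← pow_mul, mul_comm, pow_mul, hαn, one_pow]
    have hodd' : Odd ((if (α^m : F) ∈ coset α n l₁ p₁ then 1 else 0)
        + (if (α^m : F) ∈ coset α n l₂ p₂ then 1 else 0)
        + (if (α^m : F) ∈ coset α n l₃ p₃ then 1 else 0) : ℕ) := by
      rwa [if_congr (hcos l₁ p₁ hp₁ hp₁n m) rfl rfl,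
        if_congr (hcos l₂ p₂ hp₂ hp₂n m) rfl rfl,
        if_congr (hcos l₃ p₃ hp₃ hp₃n m) rfl rfl]
    have hnot := hZ (α ^ m) hγ hodd'
    simp only [definingSet, Set.mem_setOf_eq, not_and] at hnot
    have hnot2 := hnot hγ
    push_neg at hnot2
    obtain ⟨d, hd, hne⟩ := hnot2
    refine ⟨d, hd, ?_⟩
    have hco : ∀ j : Fin n, α ^ ((m:ℤ) * j.val) = (α ^ m) ^ (j.val) := by
      intro j
      rw [← pow_mul, ← zpow_natCast α (m * j.val)]
      congr 1
      try push_cast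
      try ring
    intro hzero
    apply hne
    calc ∑ j : Fin n, d j * (α ^ m) ^ (j : ℕ)
        = ∑ j : Fin n, d j * α ^ ((m:ℤ) * j.val) := by
          apply Finset.sum_congr rfl
          intro j _
          rw [hco j]
      _ = 0 := hzero
  -- c ∈ D
  have hcD : c ∈ D := by
    have hsum : c = ∑ m ∈ Finset.range n,
        (((if (p₁:ℤ) ∣ ((m:ℤ) - l₁) then (1:F) else 0) + (if (p₂:ℤ) ∣ ((m:ℤ) - l₂) then 1 else 0)
          + (if (p₃:ℤ) ∣ ((m:ℤ) - l₃) then 1 else 0)) • fun j : Fin n => α ^ (-((m:ℤ) * j.val))) := by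
      funext j
      rw [hcdef]
      simp only [Finset.sum_apply, Pi.smul_apply, smul_eq_mul, add_mul, ite_mul, one_mul,
        zero_mul]
      rw [Finset.sum_add_distrib, Finset.sum_add_distrib]
      rw [hgeo l₁ p₁ hp₁ hp₁n j, hgeo l₂ p₂ hp₂ hp₂n j, hgeo l₃ p₃ hp₃ hp₃n j]
    rw [hsum]
    refine Submodule.sum_mem _ ?_
    intro m _
    by_cases h1 : (p₁:ℤ) ∣ ((m:ℤ) - l₁) <;> by_cases h2 : (p₂:ℤ) ∣ ((m:ℤ) - l₂) <;>
      by_cases h3 : (p₃:ℤ) ∣ ((m:ℤ) - l₃)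
    · -- all three: coefficient 1+1+1 = 1
      have hco : ((if (p₁:ℤ) ∣ ((m:ℤ) - l₁) then (1:F) else 0) + (if (p₂:ℤ) ∣ ((m:ℤ) - l₂) then 1 else 0)
          + (if (p₃:ℤ) ∣ ((m:ℤ) - l₃) then 1 else 0)) = 1 := by
        rw [if_pos h1, if_pos h2, if_pos h3, h11, zero_add]
      rw [hco, one_smul]
      exact hmm m (by rw [if_pos h1, if_pos h2, if_pos h3]; decide)
    · have hco : ((if (p₁:ℤ) ∣ ((m:ℤ) - l₁) then (1:F) else 0) + (if (p₂:ℤ) ∣ ((m:ℤ) - l₂) then 1 else 0)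
          + (if (p₃:ℤ) ∣ ((m:ℤ) - l₃) then 1 else 0)) = 0 := by
        rw [if_pos h1, if_pos h2, if_neg h3, add_zero, h11]
      rw [hco, zero_smul]; exact Submodule.zero_mem D
    · have hco : ((if (p₁:ℤ) ∣ ((m:ℤ) - l₁) then (1:F) else 0) + (if (p₂:ℤ) ∣ ((m:ℤ) - l₂) then 1 else 0)
          + (if (p₃:ℤ) ∣ ((m:ℤ) - l₃) then 1 else 0)) = 0 := by
        rw [if_pos h1, if_neg h2, if_pos h3, add_zero, h11]
      rw [hco, zero_smul]; exact Submodule.zero_mem D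
    · have hco : ((if (p₁:ℤ) ∣ ((m:ℤ) - l₁) then (1:F) else 0) + (if (p₂:ℤ) ∣ ((m:ℤ) - l₂) then 1 else 0)
          + (if (p₃:ℤ) ∣ ((m:ℤ) - l₃) then 1 else 0)) = 1 := by
        rw [if_pos h1, if_neg h2, if_neg h3, add_zero, add_zero]
      rw [hco, one_smul]
      exact hmm m (by rw [if_pos h1, if_neg h2, if_neg h3]; decide)
    · have hco : ((if (p₁:ℤ) ∣ ((m:ℤ) - l₁) then (1:F) else 0) + (if (p₂:ℤ) ∣ ((m:ℤ) - l₂) then 1 else 0)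
          + (if (p₃:ℤ) ∣ ((m:ℤ) - l₃) then 1 else 0)) = 0 := by
        rw [if_neg h1, if_pos h2, if_pos h3, zero_add, h11]
      rw [hco, zero_smul]; exact Submodule.zero_mem D
    · have hco : ((if (p₁:ℤ) ∣ ((m:ℤ) - l₁) then (1:F) else 0) + (if (p₂:ℤ) ∣ ((m:ℤ) - l₂) then 1 else 0)
          + (if (p₃:ℤ) ∣ ((m:ℤ) - l₃) then 1 else 0)) = 1 := by
        rw [if_neg h1, if_pos h2, if_neg h3, zero_add, add_zero]
      rw [hco, one_smul]
      exact hmm m (by rw [if_neg h1, if_pos h2, if_neg h3]; decide)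
    · have hco : ((if (p₁:ℤ) ∣ ((m:ℤ) - l₁) then (1:F) else 0) + (if (p₂:ℤ) ∣ ((m:ℤ) - l₂) then 1 else 0)
          + (if (p₃:ℤ) ∣ ((m:ℤ) - l₃) then 1 else 0)) = 1 := by
        rw [if_neg h1, if_neg h2, if_pos h3, zero_add, zero_add]
      rw [hco, one_smul]
      exact hmm m (by rw [if_neg h1, if_neg h2, if_pos h3]; decide)
    · have hco : ((if (p₁:ℤ) ∣ ((m:ℤ) - l₁) then (1:F) else 0) + (if (p₂:ℤ) ∣ ((m:ℤ) - l₂) then 1 else 0)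
          + (if (p₃:ℤ) ∣ ((m:ℤ) - l₃) then 1 else 0)) = 0 := by
        rw [if_neg h1, if_neg h2, if_neg h3, add_zero, add_zero]
      rw [hco, zero_smul]; exact Submodule.zero_mem D
  -- c ≠ 0
  have hc0 : c ≠ 0 := by
    intro h
    have h0 := congrFun h 0
    rw [hcdef] at h0
    simp only [Fin.val_zero, Nat.zero_mul, dvd_zero, if_true, Nat.cast_zero, mul_zero,
      neg_zero, zpow_zero, Pi.zero_apply] at h0
    rw [h11, zero_add] at h0
    exact one_ne_zero h0
  -- weight bound
  set g12 := Nat.gcd (Nat.gcd p₁ p₂) (l₁ - l₂).natAbs with hg12def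
  set g13 := Nat.gcd (Nat.gcd p₁ p₃) (l₁ - l₃).natAbs with hg13def
  set g23 := Nat.gcd (Nat.gcd p₂ p₃) (l₂ - l₃).natAbs with hg23def
  set g123 := Nat.gcd (Nat.gcd (Nat.gcd (Nat.gcd p₁ p₂) p₃) (l₁ - l₂).natAbs) (l₂ - l₃).natAbs
    with hg123def
  have hgcdmul : ∀ (x y : ℕ) (j : Fin n), (n ∣ j.val * Nat.gcd x y) ↔ (n ∣ j.val * x ∧ n ∣ j.val * y) := by
    intro x y j
    rw [← Nat.gcd_mul_left j.val x y, Nat.dvd_gcd_iff]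
  have hQiff : ∀ (la lb : ℤ) (j : Fin n), (n ∣ j.val * (la - lb).natAbs)
      ↔ (α ^ (-(la * j.val)) = α ^ (-(lb * j.val))) := by
    intro la lb j
    rw [hzeq]
    have h1 : -(la * j.val) - -(lb * j.val) = -((la - lb) * j.val) := by ring
    rw [h1, dvd_neg, Int.natCast_dvd, Int.natAbs_mul, Int.natAbs_natCast, mul_comm]
  have hpt : ∀ j : Fin n,
      (if c j ≠ 0 then (1:ℤ) else 0)
        + 2 * (if n ∣ j.val * p₁ ∧ n ∣ j.val * p₂ ∧ n ∣ j.val * (l₁ - l₂).natAbs then 1 else 0)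
        + 2 * (if n ∣ j.val * p₁ ∧ n ∣ j.val * p₃ ∧ n ∣ j.val * (l₁ - l₃).natAbs then 1 else 0)
        + 2 * (if n ∣ j.val * p₂ ∧ n ∣ j.val * p₃ ∧ n ∣ j.val * (l₂ - l₃).natAbs then 1 else 0)
      ≤ (if n ∣ j.val * p₁ then 1 else 0) + (if n ∣ j.val * p₂ then 1 else 0)
          + (if n ∣ j.val * p₃ then 1 else 0)
        + 4 * (if n ∣ j.val * p₁ ∧ n ∣ j.val * p₂ ∧ n ∣ j.val * p₃
              ∧ n ∣ j.val * (l₁ - l₂).natAbs ∧ n ∣ j.val * (l₂ - l₃).natAbs then 1 else 0) := by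
    intro j
    rw [hcdef]
    exact LRCptwise hc2 _ _ _ (zpow_ne_zero _ hα0) (zpow_ne_zero _ hα0) (zpow_ne_zero _ hα0)
      _ _ _ _ _ _ (hQiff l₁ l₂ j) (hQiff l₁ l₃ j) (hQiff l₂ l₃ j)
  have hsumle := Finset.sum_le_sum (fun j (_ : j ∈ (Finset.univ : Finset (Fin n))) => hpt j)
  rw [Finset.sum_add_distrib, Finset.sum_add_distrib, Finset.sum_add_distrib,
    Finset.sum_add_distrib, Finset.sum_add_distrib, Finset.sum_add_distrib, ← Finset.mul_sum,
    ← Finset.mul_sum, ← Finset.mul_sum, ← Finset.mul_sum] at hsumle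
  -- identify the sums
  have hwtc : (∑ j : Fin n, (if c j ≠ 0 then (1:ℤ) else 0)) = (hwt c : ℤ) := by
    rw [Finset.sum_boole]
    congr 1
    rw [hwt, Nat.card_eq_fintype_card, Fintype.card_subtype]
  have hcount : ∀ (u : ℕ), 0 < u → u ∣ n →
      (∑ j : Fin n, (if n ∣ j.val * u then (1:ℤ) else 0)) = u := by
    intro u hu hun
    rw [Finset.sum_boole, LRCcount hn0 hu hun]
  have hs1 := hcount p₁ hp₁ hp₁n
  have hs2 := hcount p₂ hp₂ hp₂n
  have hs3 := hcount p₃ hp₃ hp₃n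
  have hg12pos : 0 < g12 := Nat.gcd_pos_of_pos_left _ (Nat.gcd_pos_of_pos_left _ hp₁)
  have hg13pos : 0 < g13 := Nat.gcd_pos_of_pos_left _ (Nat.gcd_pos_of_pos_left _ hp₁)
  have hg23pos : 0 < g23 := Nat.gcd_pos_of_pos_left _ (Nat.gcd_pos_of_pos_left _ hp₂)
  have hg123pos : 0 < g123 :=
    Nat.gcd_pos_of_pos_left _ (Nat.gcd_pos_of_pos_left _
      (Nat.gcd_pos_of_pos_left _ (Nat.gcd_pos_of_pos_left _ hp₁)))
  have hg12n : g12 ∣ n := dvd_trans (dvd_trans (Nat.gcd_dvd_left _ _) (Nat.gcd_dvd_left _ _)) hp₁n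
  have hg13n : g13 ∣ n := dvd_trans (dvd_trans (Nat.gcd_dvd_left _ _) (Nat.gcd_dvd_left _ _)) hp₁n
  have hg23n : g23 ∣ n := dvd_trans (dvd_trans (Nat.gcd_dvd_left _ _) (Nat.gcd_dvd_left _ _)) hp₂n
  have hg123n : g123 ∣ n := dvd_trans (dvd_trans (Nat.gcd_dvd_left _ _)
    (dvd_trans (Nat.gcd_dvd_left _ _) (dvd_trans (Nat.gcd_dvd_left _ _) (Nat.gcd_dvd_left _ _)))) hp₁n
  have he12 : (∑ j : Fin n, (if n ∣ j.val * p₁ ∧ n ∣ j.val * p₂ ∧ n ∣ j.val * (l₁ - l₂).natAbs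
      then (1:ℤ) else 0)) = g12 := by
    have hiff : ∀ j : Fin n, (n ∣ j.val * p₁ ∧ n ∣ j.val * p₂ ∧ n ∣ j.val * (l₁ - l₂).natAbs)
        ↔ n ∣ j.val * g12 := by
      intro j
      rw [hg12def, hgcdmul, hgcdmul]
      tauto
    rw [Finset.sum_congr rfl (fun j _ => if_congr (hiff j) rfl rfl), Finset.sum_boole,
      LRCcount hn0 hg12pos hg12n]
  have he13 : (∑ j : Fin n, (if n ∣ j.val * p₁ ∧ n ∣ j.val * p₃ ∧ n ∣ j.val * (l₁ - l₃).natAbs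
      then (1:ℤ) else 0)) = g13 := by
    have hiff : ∀ j : Fin n, (n ∣ j.val * p₁ ∧ n ∣ j.val * p₃ ∧ n ∣ j.val * (l₁ - l₃).natAbs)
        ↔ n ∣ j.val * g13 := by
      intro j
      rw [hg13def, hgcdmul, hgcdmul]
      tauto
    rw [Finset.sum_congr rfl (fun j _ => if_congr (hiff j) rfl rfl), Finset.sum_boole,
      LRCcount hn0 hg13pos hg13n]
  have he23 : (∑ j : Fin n, (if n ∣ j.val * p₂ ∧ n ∣ j.val * p₃ ∧ n ∣ j.val * (l₂ - l₃).natAbs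
      then (1:ℤ) else 0)) = g23 := by
    have hiff : ∀ j : Fin n, (n ∣ j.val * p₂ ∧ n ∣ j.val * p₃ ∧ n ∣ j.val * (l₂ - l₃).natAbs)
        ↔ n ∣ j.val * g23 := by
      intro j
      rw [hg23def, hgcdmul, hgcdmul]
      tauto
    rw [Finset.sum_congr rfl (fun j _ => if_congr (hiff j) rfl rfl), Finset.sum_boole,
      LRCcount hn0 hg23pos hg23n]
  have he123 : (∑ j : Fin n, (if n ∣ j.val * p₁ ∧ n ∣ j.val * p₂ ∧ n ∣ j.val * p₃
      ∧ n ∣ j.val * (l₁ - l₂).natAbs ∧ n ∣ j.val * (l₂ - l₃).natAbs then (1:ℤ) else 0)) = g123 := by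
    have hiff : ∀ j : Fin n, (n ∣ j.val * p₁ ∧ n ∣ j.val * p₂ ∧ n ∣ j.val * p₃
        ∧ n ∣ j.val * (l₁ - l₂).natAbs ∧ n ∣ j.val * (l₂ - l₃).natAbs)
        ↔ n ∣ j.val * g123 := by
      intro j
      rw [hg123def, hgcdmul, hgcdmul, hgcdmul, hgcdmul]
      tauto
    rw [Finset.sum_congr rfl (fun j _ => if_congr (hiff j) rfl rfl), Finset.sum_boole,
      LRCcount hn0 hg123pos hg123n]
  rw [hwtc, hs1, hs2, hs3, he12, he13, he23, he123] at hsumle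
  -- minimum distance
  have hmin : minDist D ≤ hwt c := by
    unfold minDist
    exact Nat.sInf_le ⟨c, hcD, hc0, rfl⟩
  have hmin' : (minDist D : ℤ) ≤ (hwt c : ℤ) := by exact_mod_cast hmin
  linarith

end LRC
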